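/- Let f(t) = t^m − ∑_{i=0}^{m-1} a_i t^i ∈ R = D[t;σ] have minimal central left multiple h(t) = ĥ(u^{-1}t^n) for a monic ĥ ∈ F[x] with constant coefficient h_0. Then the following are equivalent: (a) a_0 ≠ 0; (b) the greatest common right divisor (f,t)_r = 1; (c) h_0 ≠ 0; (d) (h,t)_r = 1. Moreover, if these equivalent conditions hold, then f(t) ≠ t and ĥ(x) ≠ x. -/

import Mathlib

/-- `g` right-divides `f`, i.e. `f ∈ Rg`. -/
def RDvd {R : Type} [Ring R] (g f : R) : Prop := ∃ q : R, f = q * g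

/-- `f` is right-invariant : `f·R ⊆ R·f`. -/
def RightInvariant {R : Type} [Ring R] (f : R) : Prop := ∀ r : R, ∃ q : R, f * r = q * f

/-- `(f, g)_r = 1`: the only common right divisors of `f` and `g` are units. -/
def RightCoprimeWith {R : Type} [Ring R] (f g : R) : Prop :=
  ∀ e : R, RDvd e f → RDvd e g → IsUnit e

/-- `f` and `g` are similar: `R/Rf ≅ R/Rg` as left `R`-modules. -/
def SimilarP {R : Type} [Ring R] (f g : R) : Prop :=
  Nonempty ((R ⧸ (Submodule.span R {f})) ≃ₗ[R] (R ⧸ (Submodule.span R {g})))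

/-- `b` is a bound of `f`: `b` is right-invariant, `f` right-divides `b`, and `Rb` is the
largest two-sided ideal contained in `Rf`. -/
def IsBound {R : Type} [Ring R] (f b : R) : Prop :=
  b ≠ 0 ∧ RightInvariant b ∧ RDvd f b ∧
    ∀ g : R, g ≠ 0 → RightInvariant g → RDvd f g → RDvd b g

/-- Data witnessing that the ring `R` is a skew polynomial ring `D[t;sigma,delta]`:
`iota` embeds the coefficients, `t` is the indeterminate with `t*a = sigma(a)*t + delta(a)`,
every element has a unique finite coefficient representation, and `rmod g f` is the
remainder of `g` upon right division by `f`. -/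
structure SkewPolyData (D : Type) [DivisionRing D] (σ : D →+* D) (δ : D → D)
    (R : Type) [Ring R] where
  ι : D →+* R
  t : R
  coeff : R → (ℕ →₀ D)
  rmod : R → R → R
  t_mul : ∀ a : D, t * ι a = ι (σ a) * t + ι (δ a)
  sum_coeff : ∀ x : R, ((coeff x).sum fun i a => ι a * t ^ i) = x
  coeff_sum : ∀ c : ℕ →₀ D, coeff (c.sum fun i a => ι a * t ^ i) = c
  rmod_spec : ∀ g f : R, f ≠ 0 →
    (∃ q : R, g = q * f + rmod g f) ∧
      (coeff (rmod g f)).support.max < (coeff f).support.max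

namespace SkewPolyData

variable {D : Type} [DivisionRing D] {σ : D →+* D} {δ : D → D}
variable {R : Type} [Ring R] (S : SkewPolyData D σ δ R)

/-- The degree of a skew polynomial (`⊥` for `0`). -/
noncomputable def deg (x : R) : WithBot ℕ := (S.coeff x).support.max

/-- `f` is monic of degree `m`. -/
def MonicDeg (f : R) (m : ℕ) : Prop := S.coeff f m = 1 ∧ S.deg f = (m : WithBot ℕ)

/-- `f` is irreducible in `R`: it is non-constant and is not a product of two
polynomials of strictly smaller degree. -/
def Irred (f : R) : Prop :=
  (1 : WithBot ℕ) ≤ S.deg f ∧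
    ∀ g h : R, f = g * h → S.deg g < S.deg f → S.deg h < S.deg f → False

/-- multiplication in the Petit algebra `S_f` (on representatives in `R`). -/
def pmul (f a b : R) : R := S.rmod (a * b) f

/-- the underlying set of the Petit algebra `S_f`: polynomials of degree `< deg f`. -/
def carr (f : R) : Set R := {x : R | S.deg x < S.deg f}

/-- the right nucleus of the Petit algebra `S_f`. -/
def NucR (f : R) : Set R :=
  {x : R | x ∈ S.carr f ∧ ∀ a ∈ S.carr f, ∀ b ∈ S.carr f,
    S.pmul f (S.pmul f a b) x = S.pmul f a (S.pmul f b x)}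

/-- the nucleus (left ∩ middle ∩ right) of the Petit algebra `S_f`. -/
def NucAll (f : R) : Set R :=
  {x : R | x ∈ S.carr f ∧
    (∀ a ∈ S.carr f, ∀ b ∈ S.carr f,
      S.pmul f (S.pmul f x a) b = S.pmul f x (S.pmul f a b)) ∧
    (∀ a ∈ S.carr f, ∀ b ∈ S.carr f,
      S.pmul f (S.pmul f a x) b = S.pmul f a (S.pmul f x b)) ∧
    (∀ a ∈ S.carr f, ∀ b ∈ S.carr f,
      S.pmul f (S.pmul f a b) x = S.pmul f a (S.pmul f b x))}

/-- the eigenring `E(f)` of `f`, as the set of its canonical representatives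
(polynomials of degree `< deg f` with `f·g ∈ Rf`), with multiplication `pmul f`. -/
def EigR (f : R) : Set R :=
  {x : R | S.deg x < S.deg f ∧ ∃ q : R, f * x = q * f}

/-- evaluation of a polynomial with coefficients in the subfield `K` of `D`
at the (central) element `x₀` of `R`. -/
noncomputable def ceval (K : Subfield D) (x₀ : R) (p : Polynomial K) : R :=
  Polynomial.eval₂ (S.ι.comp K.subtype) x₀ p

/-- `h = p(x₀)` is the minimal central left multiple of `f`: `p ∈ K[x]` is monic of
minimal degree such that `f` right-divides `p(x₀)`, and `h = p(x₀)`. -/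
def IsMclm (K : Subfield D) (x₀ : R) (f h : R) (p : Polynomial K) : Prop :=
  p.Monic ∧ h = S.ceval K x₀ p ∧ RDvd f h ∧
    ∀ q : Polynomial K, q.Monic → RDvd f (S.ceval K x₀ q) → p.degree ≤ q.degree

/-- the subset `X` of `R` has a basis of size `N` over the set of coefficients `Fc ⊆ D`. -/
def RelDimR (Fc : Set D) (X : Set R) (N : ℕ) : Prop :=
  ∃ b : Fin N → R, (∀ i, b i ∈ X) ∧
    ∀ x ∈ X, ∃! cf : Fin N → D, (∀ i, cf i ∈ Fc) ∧ x = ∑ i, S.ι (cf i) * b i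

/-- `ψ` restricts to an isomorphism of the subset `X` of the Petit algebra `S_f`
(with multiplication `∘_f`) onto the ring `B`. -/
def SubMulIso (f : R) (X : Set R) (B : Type) [Ring B] (ψ : R → B) : Prop :=
  Set.BijOn ψ X Set.univ ∧ ψ 1 = 1 ∧
    ∀ x ∈ X, ∀ y ∈ X,
      ψ (x + y) = ψ x + ψ y ∧ ψ (S.pmul f x y) = ψ x * ψ y

end SkewPolyData

/-- the subset `X ⊆ D` has a basis of size `N` over the set of coefficients `Fc ⊆ D`. -/
def RelDimD {D : Type} [DivisionRing D] (Fc X : Set D) (N : ℕ) : Prop :=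
  ∃ b : Fin N → D, (∀ i, b i ∈ X) ∧
    ∀ x ∈ X, ∃! cf : Fin N → D, (∀ i, cf i ∈ Fc) ∧ x = ∑ i, cf i * b i

theorem deltaZero {D : Type} [DivisionRing D] {δ : D → D}
    (hadd : ∀ x y : D, δ (x + y) = δ x + δ y) : δ 0 = 0 := by
  have h := hadd 0 0
  rw [add_zero] at h
  exact left_eq_add.mp h

theorem deltaOne {D : Type} [DivisionRing D] {σ : D →+* D} {δ : D → D}
    (hleib : ∀ x y : D, δ (x * y) = σ x * δ y + δ x * y) : δ 1 = 0 := by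
  have h := hleib 1 1
  rw [mul_one, map_one, one_mul, mul_one] at h
  exact left_eq_add.mp h

/-- the subfield `F = C ∩ Fix(σ) ∩ Const(δ)` of `D`. -/
def ctrSubfield {D : Type} [DivisionRing D] (σ : D →+* D) (δ : D → D)
    (hadd : ∀ x y : D, δ (x + y) = δ x + δ y)
    (hleib : ∀ x y : D, δ (x * y) = σ x * δ y + δ x * y) : Subfield D where
  carrier := {a : D | a ∈ Set.center D ∧ σ a = a ∧ δ a = 0}
  zero_mem' := ⟨Set.zero_mem_center, map_zero σ, deltaZero hadd⟩
  one_mem' := ⟨Set.one_mem_center, map_one σ, deltaOne (σ := σ) hleib⟩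
  add_mem' := fun ha hb =>
    ⟨Set.add_mem_center ha.1 hb.1, by rw [map_add, ha.2.1, hb.2.1],
      by rw [hadd, ha.2.2, hb.2.2, add_zero]⟩
  mul_mem' := fun ha hb =>
    ⟨Set.mul_mem_center ha.1 hb.1, by rw [map_mul, ha.2.1, hb.2.1],
      by rw [hleib, ha.2.2, hb.2.2, mul_zero, zero_mul, add_zero]⟩
  neg_mem' := fun {a} ha => by
    refine ⟨Set.neg_mem_center ha.1, by rw [map_neg, ha.2.1], ?_⟩
    have h := hadd a (-a)
    rw [add_neg_cancel, deltaZero hadd, ha.2.2, zero_add] at h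
    exact h.symm
  inv_mem' := fun a ha => by
    refine ⟨Set.inv_mem_center ha.1, by rw [map_inv₀, ha.2.1], ?_⟩
    by_cases h : a = 0
    · rw [h, inv_zero]; exact deltaZero hadd
    · have hl := hleib a a⁻¹
      rw [mul_inv_cancel₀ h, deltaOne (σ := σ) hleib, ha.2.2, zero_mul, add_zero] at hl
      rcases mul_eq_zero.mp hl.symm with h1 | h2
      · exact absurd (σ.injective (by rw [h1, map_zero])) h
      · exact h2


/-- `B` is a central algebra of degree `s` over the quotient `K[x]/(P)`:
there is a homomorphism `χ : K[x] →+* B` with kernel `(P)` whose range is the center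
of `B`, and `B` has a basis of size `s²` over the center, with coefficients
unique modulo `P`. -/
def IsCentralAlgModOfDeg {K : Type} [DivisionRing K] (P : Polynomial K)
    (B : Type) [Ring B] (s : ℕ) : Prop :=
  ∃ χ : Polynomial K →+* B, (∀ q : Polynomial K, χ q = 0 ↔ P ∣ q) ∧
    Set.range ⇑χ = Set.center B ∧
    ∃ bb : Fin (s * s) → B, ∀ x : B,
      ∃ cf : Fin (s * s) → Polynomial K, x = ∑ i, χ (cf i) * bb i ∧
        ∀ cf' : Fin (s * s) → Polynomial K,
          x = ∑ i, χ (cf' i) * bb i → ∀ i, P ∣ (cf i - cf' i)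

/-- `B` is a (finite-dimensional) central simple algebra over the field `K`. -/
def CentralSimpleOver (K : Type) [DivisionRing K] (B : Type) [Ring B] : Prop :=
  IsSimpleRing B ∧ ∃ χ : K →+* B, Function.Injective ⇑χ ∧ Set.range ⇑χ = Set.center B ∧
    ∃ (N : ℕ) (bb : Fin N → B), ∀ x : B, ∃! cf : Fin N → K, x = ∑ i, χ (cf i) * bb i

/-- The maps `Δ_{j,i}` associated with `(σ, δ)`. -/
def Delta {D : Type} [DivisionRing D] (σ : D →+* D) (δ : D → D) : ℕ → ℕ → D → D
  | 0, 0 => id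
  | 0, _ + 1 => fun _ => 0
  | j + 1, 0 => fun a => δ (Delta σ δ j 0 a)
  | j + 1, i + 1 => fun a => δ (Delta σ δ j (i + 1) a) + σ (Delta σ δ j i a)

/-- `χ` realises an isomorphism from the commutative quotient `K[x]/(P)` onto the
subset `X` of the Petit algebra `S_f` (with multiplication `∘_f`). -/
def QuotMulIso {D : Type} [DivisionRing D] {σ : D →+* D} {δ : D → D} {R : Type} [Ring R]
    (S : SkewPolyData D σ δ R) (f : R) (X : Set R) (K : Subfield D)
    (P : Polynomial ↥K) (χ : Polynomial ↥K → R) : Prop :=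
  (∀ q, χ q ∈ X) ∧ χ 1 = 1 ∧ (∀ q r, χ (q + r) = χ q + χ r) ∧
    (∀ q r, χ (q * r) = S.pmul f (χ q) (χ r)) ∧
    (∀ x ∈ X, ∃ q, χ q = x) ∧ (∀ q, χ q = 0 ↔ P ∣ q)

/-- A description of the right nucleus of the Petit algebra `S_f` as a central division
algebra `B` of degree `s` over `E = K[x]/(P)`, together with a ring isomorphism
`R/Rh ≅ M_k(Nuc_r(S_f))` (given by a surjective ring homomorphism with kernel `Rh`). -/
structure NucCDADesc {D : Type} [DivisionRing D] {σ : D →+* D} {δ : D → D}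
    {R : Type} [Ring R] (S : SkewPolyData D σ δ R)
    (f h : R) (K : Subfield D) (P : Polynomial ↥K) (s k : ℕ) where
  B : Type
  [instB : DivisionRing B]
  ψ : R → B
  hψ : S.SubMulIso f (S.NucR f) B ψ
  hcda : IsCentralAlgModOfDeg P B s
  Φ : R →+* Matrix (Fin k) (Fin k) B
  hΦ : Function.Surjective ⇑Φ
  hker : ∀ x : R, Φ x = 0 ↔ ∃ q : R, x = q * h

/-- A description of the eigenring of an irreducible divisor `g` of `h` as a central
division algebra `B` of degree `sp` over `E = K[x]/(P)`, with `R/Rh ≅ M_k(B)` and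
`Nuc_r(S_f) ≅ M_l(B)` a central simple algebra of degree `l·sp` over `E`. -/
structure EigCDADesc {D : Type} [DivisionRing D] {σ : D →+* D} {δ : D → D}
    {R : Type} [Ring R] (S : SkewPolyData D σ δ R)
    (f h g : R) (K : Subfield D) (P : Polynomial ↥K) (l k sp : ℕ) where
  B : Type
  [instB : DivisionRing B]
  ψg : R → B
  hψg : S.SubMulIso g (S.EigR g) B ψg
  hcda : IsCentralAlgModOfDeg P B sp
  Φ : R →+* Matrix (Fin k) (Fin k) B
  hΦ : Function.Surjective ⇑Φ
  hker : ∀ x : R, Φ x = 0 ↔ ∃ q : R, x = q * h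
  ψ : R → Matrix (Fin l) (Fin l) B
  hψ : S.SubMulIso f (S.NucR f) (Matrix (Fin l) (Fin l) B) ψ
  hcsa : IsCentralAlgModOfDeg P (Matrix (Fin l) (Fin l) B) (l * sp)
  hsimple : IsSimpleRing (Matrix (Fin l) (Fin l) B)

/-- A description of the eigenring of `f` as a central simple algebra over the field `K`. -/
structure CSADesc {D : Type} [DivisionRing D] {σ : D →+* D} {δ : D → D}
    {R : Type} [Ring R] (S : SkewPolyData D σ δ R) (f : R) (K : Subfield D) where
  B : Type
  [instB : Ring B]
  ψ : R → B
  hψ : S.SubMulIso f (S.EigR f) B ψ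
  hcsa : CentralSimpleOver ↥K B

/-- A description of `R/Rh` as a semisimple Artinian ring, direct sum of the simple
Artinian rings `R/Rπᵢ`, of the decomposition of `R/Rf` into simple modules, and of
the right nucleus of `S_f` as `⊕ᵢ M_{rsᵢ}(E(fiᵢ))`. -/
structure SemisimpleDesc {D : Type} [DivisionRing D] {σ : D →+* D} {δ : D → D}
    {R : Type} [Ring R] (S : SkewPolyData D σ δ R)
    (f h : R) (z : ℕ) (π : Fin z → R) (fi : Fin z → R) (rs : Fin z → ℕ) where
  A : Fin z → Type
  [instA : ∀ i, Ring (A i)]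
  φ : ∀ i, R →+* A i
  hφsurj : ∀ i, Function.Surjective ⇑(φ i)
  hφker : ∀ i, ∀ x : R, φ i x = 0 ↔ ∃ q : R, x = q * π i
  hsimpleA : ∀ i, IsSimpleRing (A i)
  hartA : ∀ i, IsArtinianRing (A i)
  hss : IsSemisimpleRing ((i : Fin z) → A i)
  hart : IsArtinianRing ((i : Fin z) → A i)
  hPisurj : Function.Surjective ⇑(Pi.ringHom φ)
  hPiker : ∀ x : R, Pi.ringHom φ x = 0 ↔ ∃ q : R, x = q * h
  modIso : (R ⧸ (Submodule.span R {f})) ≃ₗ[R]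
      ((i : Fin z) → Fin (rs i) → (R ⧸ (Submodule.span R {fi i})))
  B : Fin z → Type
  [instB : ∀ i, Ring (B i)]
  ψg : ∀ i, R → B i
  hψg : ∀ i, S.SubMulIso (fi i) (S.EigR (fi i)) (B i) (ψg i)
  Ψ : R → ((i : Fin z) → Matrix (Fin (rs i)) (Fin (rs i)) (B i))
  hΨ : S.SubMulIso f (S.NucR f) ((i : Fin z) → Matrix (Fin (rs i)) (Fin (rs i)) (B i)) Ψ
  hssNuc : IsSemisimpleRing ((i : Fin z) → Matrix (Fin (rs i)) (Fin (rs i)) (B i))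
  hartNuc : IsArtinianRing ((i : Fin z) → Matrix (Fin (rs i)) (Fin (rs i)) (B i))

/-- the subfield `F = C ∩ Fix(σ)` of `D` (for `δ = 0`). -/
def fixC {D : Type} [DivisionRing D] (σ : D →+* D) : Subfield D :=
  ctrSubfield σ (fun _ => 0) (fun _ _ => by simp) (fun _ _ => by simp)

/-- the subfield `F = C ∩ Const(δ)` of `D` (for `σ = id`). -/
def constC {D : Type} [DivisionRing D] (δ : D → D)
    (hadd : ∀ x y : D, δ (x + y) = δ x + δ y)
    (hleib : ∀ x y : D, δ (x * y) = x * δ y + δ x * y) : Subfield D :=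
  ctrSubfield (RingHom.id D) δ hadd (fun x y => by simpa using hleib x y)

section SkewAux

variable {D R : Type} [DivisionRing D] [Ring R] {σ : D →+* D}

namespace SkewPolyData

variable (S : SkewPolyData D σ (fun _ => 0) R)

/-- constant coefficient -/
noncomputable def c0 (x : R) : D := S.coeff x 0

/-- coefficientwise application of σ -/
noncomputable def θ (x : R) : R :=
  (Finsupp.mapRange ⇑σ σ.map_zero (S.coeff x)).sum fun i a => S.ι a * S.t ^ i

theorem coeff_inj {x y : R} (h : S.coeff x = S.coeff y) : x = y := by
  rw [← S.sum_coeff x, ← S.sum_coeff y, h]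

theorem coeff_zero' : S.coeff 0 = 0 := by
  have := S.coeff_sum 0
  rwa [Finsupp.sum_zero_index] at this

theorem coeff_monom (a : D) (i : ℕ) : S.coeff (S.ι a * S.t ^ i) = Finsupp.single i a := by
  have := S.coeff_sum (Finsupp.single i a)
  rwa [Finsupp.sum_single_index (by simp)] at this

theorem coeff_add' (x y : R) : S.coeff (x + y) = S.coeff x + S.coeff y := by
  conv_lhs => rw [← S.sum_coeff x, ← S.sum_coeff y]
  rw [← Finsupp.sum_add_index' (fun i => by simp) (fun i a b => by rw [map_add, add_mul])]
  exact S.coeff_sum _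

theorem coeff_one' : S.coeff (1 : R) = Finsupp.single 0 1 := by
  have := S.coeff_monom 1 0
  simpa using this

theorem coeff_t : S.coeff S.t = Finsupp.single 1 1 := by
  have := S.coeff_monom 1 1
  simpa using this

theorem coeff_tpow (i : ℕ) : S.coeff (S.t ^ i) = Finsupp.single i 1 := by
  have := S.coeff_monom 1 i
  simpa using this

include S in
theorem one_ne_zero' : (1 : R) ≠ 0 := by
  intro h
  have h2 : S.coeff (1 : R) = S.coeff 0 := by rw [h]
  rw [S.coeff_one', S.coeff_zero'] at h2
  exact one_ne_zero (Finsupp.single_eq_zero.mp h2)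

theorem tmul (a : D) : S.t * S.ι a = S.ι (σ a) * S.t := by
  have := S.t_mul a
  simpa using this

theorem coeff_theta (x : R) :
    S.coeff (S.θ x) = Finsupp.mapRange ⇑σ σ.map_zero (S.coeff x) := S.coeff_sum _

theorem c0_theta (x : R) : S.c0 (S.θ x) = σ (S.c0 x) := by
  rw [c0, S.coeff_theta]; simp [c0]

theorem t_mul_eq (x : R) : S.t * x = S.θ x * S.t := by
  conv_lhs => rw [← S.sum_coeff x]
  rw [θ, Finsupp.mul_sum, Finsupp.sum_mul, Finsupp.sum_mapRange_index (by simp)]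
  apply Finsupp.sum_congr
  intro i _
  rw [← mul_assoc, S.tmul, mul_assoc, mul_assoc, ← pow_succ', ← pow_succ]

theorem coeff_mul_t (x : R) :
    S.coeff (x * S.t) = Finsupp.embDomain ⟨Nat.succ, Nat.succ_injective⟩ (S.coeff x) := by
  conv_lhs => rw [← S.sum_coeff x]
  rw [Finsupp.sum_mul]
  have : ((S.coeff x).sum fun i a => S.ι a * S.t ^ i * S.t)
      = (Finsupp.embDomain ⟨Nat.succ, Nat.succ_injective⟩ (S.coeff x)).sum
        fun i a => S.ι a * S.t ^ i := by
    rw [Finsupp.sum_embDomain]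
    apply Finsupp.sum_congr
    intro i _
    rw [mul_assoc, ← pow_succ]
    rfl
  rw [this, S.coeff_sum]

theorem t_cancel {x y : R} (h : x * S.t = y * S.t) : x = y := by
  apply S.coeff_inj
  have := congrArg S.coeff h
  rw [S.coeff_mul_t, S.coeff_mul_t] at this
  exact Finsupp.embDomain_injective _ this

theorem c0_mul_t (x : R) : S.c0 (x * S.t) = 0 := by
  rw [c0, S.coeff_mul_t]
  apply Finsupp.embDomain_notin_range
  rintro ⟨i, hi⟩
  exact Nat.succ_ne_zero i hi

theorem mul_t_ne_zero {x : R} (hx : x ≠ 0) : x * S.t ≠ 0 := by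
  intro h
  apply hx
  apply S.coeff_inj
  have h2 : S.coeff (x * S.t) = S.coeff 0 := by rw [h]
  rw [S.coeff_mul_t, S.coeff_zero'] at h2
  rw [S.coeff_zero']
  refine Finsupp.embDomain_injective (⟨Nat.succ, Nat.succ_injective⟩ : ℕ ↪ ℕ) ?_
  rw [h2, Finsupp.embDomain_zero]

theorem decomp (x : R) : ∃ q : R, x = q * S.t + S.ι (S.c0 x) := by
  refine ⟨((S.coeff x).erase 0).sum fun i a => S.ι a * S.t ^ (i - 1), ?_⟩
  conv_lhs => rw [← S.sum_coeff x]
  conv_lhs => rw [← Finsupp.single_add_erase 0 (S.coeff x)]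
  rw [Finsupp.sum_add_index' (fun i => by simp) (fun i a b => by rw [map_add, add_mul])]
  rw [Finsupp.sum_single_index (by simp), pow_zero, mul_one, Finsupp.sum_mul, add_comm]
  congr 1
  apply Finsupp.sum_congr
  intro i hi
  have hi0 : i ≠ 0 := by
    have := Finsupp.support_erase (a := 0) (f := S.coeff x) ▸ hi
    simp only [Finset.mem_erase] at this
    exact this.1
  rw [mul_assoc, ← pow_succ, Nat.sub_add_cancel (Nat.one_le_iff_ne_zero.mpr hi0)]

theorem c0_add (x y : R) : S.c0 (x + y) = S.c0 x + S.c0 y := by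
  rw [c0, c0, c0, S.coeff_add']; rfl

theorem c0_zero : S.c0 (0 : R) = 0 := by rw [c0, S.coeff_zero']; rfl

theorem c0_one : S.c0 (1 : R) = 1 := by rw [c0, S.coeff_one']; simp

theorem c0_iota (a : D) : S.c0 (S.ι a) = a := by
  have := S.coeff_monom a 0
  rw [pow_zero, mul_one] at this
  rw [c0, this]; simp

theorem c0_t : S.c0 S.t = 0 := by rw [c0, S.coeff_t]; simp

theorem c0_iota_mul (a : D) (y : R) : S.c0 (S.ι a * y) = a * S.c0 y := by
  conv_lhs => rw [← S.sum_coeff y]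
  rw [Finsupp.mul_sum]
  have : ((S.coeff y).sum fun i b => S.ι a * (S.ι b * S.t ^ i))
      = (Finsupp.mapRange (fun b => a * b) (by simp) (S.coeff y)).sum
        fun i b => S.ι b * S.t ^ i := by
    rw [Finsupp.sum_mapRange_index (by simp)]
    apply Finsupp.sum_congr
    intro i _
    rw [← mul_assoc, ← map_mul]
  rw [this, c0, S.coeff_sum]
  simp [c0]

theorem c0_mul (x y : R) : S.c0 (x * y) = S.c0 x * S.c0 y := by
  obtain ⟨q, hq⟩ := S.decomp x
  have hxy : x * y = (q * S.θ y) * S.t + S.ι (S.c0 x) * y := by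
    conv_lhs => rw [hq, add_mul, mul_assoc, S.t_mul_eq y, ← mul_assoc]
  rw [hxy, S.c0_add, S.c0_mul_t, S.c0_iota_mul, zero_add]

theorem theta_zero : S.θ (0 : R) = 0 := by
  apply S.coeff_inj
  rw [S.coeff_theta, S.coeff_zero']
  simp [S.coeff_zero']

theorem theta_one : S.θ (1 : R) = 1 := by
  apply S.t_cancel
  rw [← S.t_mul_eq, mul_one, one_mul]

theorem theta_add (x y : R) : S.θ (x + y) = S.θ x + S.θ y := by
  apply S.t_cancel
  rw [← S.t_mul_eq, mul_add, S.t_mul_eq x, S.t_mul_eq y, add_mul]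

theorem theta_mul (x y : R) : S.θ (x * y) = S.θ x * S.θ y := by
  apply S.t_cancel
  rw [← S.t_mul_eq, ← mul_assoc, S.t_mul_eq x, mul_assoc, S.t_mul_eq y, mul_assoc]

theorem theta_inj : Function.Injective S.θ := by
  intro x y hxy
  apply S.coeff_inj
  have h2 := congrArg S.coeff hxy
  rw [S.coeff_theta, S.coeff_theta] at h2
  ext i
  have h3 := DFunLike.congr_fun h2 i
  simp only [Finsupp.mapRange_apply] at h3
  exact σ.injective h3

theorem theta_surj (hσ : Function.Bijective ⇑σ) : Function.Surjective S.θ := by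
  intro y
  obtain ⟨e, he⟩ : ∃ e : D →+* D, ∀ b, σ (e b) = b := by
    refine ⟨(RingEquiv.ofBijective σ hσ).symm.toRingHom, fun b => ?_⟩
    exact (RingEquiv.ofBijective σ hσ).apply_symm_apply b
  refine ⟨(Finsupp.mapRange ⇑e e.map_zero (S.coeff y)).sum fun i a => S.ι a * S.t ^ i, ?_⟩
  apply S.coeff_inj
  rw [S.coeff_theta, S.coeff_sum]
  ext i
  simp [Finsupp.mapRange_apply, he]

theorem theta_iter_mul (k : ℕ) (x y : R) :
    S.θ^[k] (x * y) = S.θ^[k] x * S.θ^[k] y := by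
  induction k generalizing x y with
  | zero => simp
  | succ k ih =>
    rw [Function.iterate_succ_apply, Function.iterate_succ_apply,
      Function.iterate_succ_apply, S.theta_mul, ih]

theorem theta_iter_inj (k : ℕ) : Function.Injective (S.θ^[k]) :=
  Function.Injective.iterate S.theta_inj k

theorem theta_iter_surj (hσ : Function.Bijective ⇑σ) (k : ℕ) :
    Function.Surjective (S.θ^[k]) :=
  Function.Surjective.iterate (S.theta_surj hσ) k

theorem sigma_iter_ne {a : D} (ha : a ≠ 0) (k : ℕ) : (⇑σ)^[k] a ≠ 0 := by
  induction k with
  | zero => simpa using ha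
  | succ k ih =>
    rw [Function.iterate_succ_apply']
    intro hh
    exact ih (σ.injective (by rw [hh, map_zero]))

theorem c0_theta_iter (k : ℕ) (x : R) : S.c0 (S.θ^[k] x) = (⇑σ)^[k] (S.c0 x) := by
  induction k with
  | zero => simp
  | succ k ih =>
    rw [Function.iterate_succ_apply', Function.iterate_succ_apply', S.c0_theta, ih]

theorem tpow_mul_eq (k : ℕ) (x : R) : S.t ^ k * x = S.θ^[k] x * S.t ^ k := by
  induction k generalizing x with
  | zero => simp
  | succ k ih =>
    rw [pow_succ, mul_assoc, S.t_mul_eq, ← mul_assoc, ih, Function.iterate_succ_apply,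
      mul_assoc, ← pow_succ]

theorem rdvd_t_iff (x : R) : RDvd S.t x ↔ S.c0 x = 0 := by
  constructor
  · rintro ⟨q, rfl⟩
    exact S.c0_mul_t q
  · intro h0
    obtain ⟨q, hq⟩ := S.decomp x
    exact ⟨q, by rw [hq, h0, map_zero, add_zero]⟩

theorem strip_aux (N : ℕ) : ∀ x : R, x ≠ 0 → (∀ i ∈ (S.coeff x).support, i ≤ N) →
    ∃ (x₁ : R) (k : ℕ), S.c0 x₁ ≠ 0 ∧ x = x₁ * S.t ^ k := by
  induction N with
  | zero =>
    intro x hx hN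
    by_cases h0 : S.c0 x = 0
    · exfalso
      apply hx
      apply S.coeff_inj
      rw [S.coeff_zero']
      ext i
      simp only [Finsupp.coe_zero, Pi.zero_apply]
      by_cases hi : i = 0
      · subst hi; exact h0
      · by_contra hne
        have : i ∈ (S.coeff x).support := Finsupp.mem_support_iff.mpr hne
        exact hi (Nat.le_zero.mp (hN i this))
    · exact ⟨x, 0, h0, by rw [pow_zero, mul_one]⟩
  | succ N ih =>
    intro x hx hN
    by_cases h0 : S.c0 x = 0
    · obtain ⟨q, hq⟩ := S.decomp x
      rw [h0, map_zero, add_zero] at hq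
      have hqne : q ≠ 0 := by
        intro hh; apply hx; rw [hq, hh, zero_mul]
      have hcq : S.coeff x = Finsupp.embDomain ⟨Nat.succ, Nat.succ_injective⟩ (S.coeff q) := by
        rw [hq, S.coeff_mul_t]
      have hNq : ∀ i ∈ (S.coeff q).support, i ≤ N := by
        intro i hi
        have hmem : i + 1 ∈ (S.coeff x).support := by
          rw [hcq, Finsupp.support_embDomain]
          exact Finset.mem_map.mpr ⟨i, hi, rfl⟩
        have := hN _ hmem
        omega
      obtain ⟨x₁, k, hc, hk⟩ := ih q hqne hNq
      exact ⟨x₁, k + 1, hc, by rw [hq, hk, mul_assoc, ← pow_succ]⟩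
    · exact ⟨x, 0, h0, by rw [pow_zero, mul_one]⟩

theorem strip {x : R} (hx : x ≠ 0) : ∃ (x₁ : R) (k : ℕ), S.c0 x₁ ≠ 0 ∧ x = x₁ * S.t ^ k :=
  S.strip_aux ((S.coeff x).support.sup id) x hx (fun i hi => Finset.le_sup (f := id) hi)

theorem mul_tpow_ne_zero {x : R} (hx : x ≠ 0) (k : ℕ) : x * S.t ^ k ≠ 0 := by
  induction k with
  | zero => simpa using hx
  | succ k ih =>
    rw [pow_succ, ← mul_assoc]
    exact S.mul_t_ne_zero ih

theorem c0_ne_zero_of_ne {x : R} (hc : S.c0 x ≠ 0) : x ≠ 0 := by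
  intro h; rw [h, S.c0_zero] at hc; exact hc rfl

include S in
theorem domain {x y : R} (hx : x ≠ 0) (hy : y ≠ 0) :
    x * y ≠ 0 := by
  obtain ⟨x₁, k, hcx, rfl⟩ := S.strip hx
  obtain ⟨y₁, l, hcy, rfl⟩ := S.strip hy
  have : x₁ * S.t ^ k * (y₁ * S.t ^ l) = (x₁ * S.θ^[k] y₁) * S.t ^ (k + l) := by
    rw [mul_assoc, ← mul_assoc (S.t ^ k), S.tpow_mul_eq, mul_assoc, ← pow_add, ← mul_assoc]
  rw [this]
  apply S.mul_tpow_ne_zero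
  apply S.c0_ne_zero_of_ne
  rw [S.c0_mul, S.c0_theta_iter]
  exact mul_ne_zero hcx (sigma_iter_ne hcy k)

theorem t_not_unit : ¬ IsUnit S.t := by
  intro hu
  obtain ⟨v, hv⟩ := hu.exists_left_inv
  have := congrArg S.c0 hv
  rw [S.c0_mul, S.c0_t, mul_zero, S.c0_one] at this
  exact one_ne_zero this.symm

theorem coprime_with_t_iff (hσ : Function.Bijective ⇑σ) (x : R) :
    RightCoprimeWith x S.t ↔ S.c0 x ≠ 0 := by
  constructor
  · intro hcop h0
    obtain ⟨q, hq⟩ := (S.rdvd_t_iff x).mpr h0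
    exact S.t_not_unit (hcop S.t ⟨q, hq⟩ ⟨1, (one_mul S.t).symm⟩)
  · rintro hc e ⟨p, hp⟩ ⟨q, hq⟩
    have hce : S.c0 e ≠ 0 := by
      intro h
      rw [hp, S.c0_mul, h, mul_zero] at hc
      exact hc rfl
    have hcq : S.c0 q = 0 := by
      have := congrArg S.c0 hq
      rw [S.c0_t, S.c0_mul] at this
      rcases mul_eq_zero.mp this.symm with h | h
      · exact h
      · exact absurd h hce
    obtain ⟨q₁, hq₁⟩ := (S.rdvd_t_iff q).mpr hcq
    have key : 1 * S.t = (q₁ * S.θ e) * S.t := by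
      rw [one_mul, mul_assoc, ← S.t_mul_eq, ← mul_assoc, ← hq₁, ← hq]
    have hq₁e : q₁ * S.θ e = 1 := (S.t_cancel key).symm
    have hene : S.θ e ≠ 0 := by
      apply S.c0_ne_zero_of_ne
      rw [S.c0_theta]
      exact fun hh => hce (σ.injective (by rw [hh, map_zero]))
    have hq₁ne : q₁ ≠ 0 := by
      intro hh
      rw [hh, zero_mul] at hq₁e
      exact S.one_ne_zero' hq₁e.symm
    have hidem : (S.θ e * q₁) * ((S.θ e * q₁) - 1) = 0 := by
      have h5 : (S.θ e * q₁) * (S.θ e * q₁) = S.θ e * q₁ := by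
        rw [mul_assoc, ← mul_assoc q₁, hq₁e, one_mul]
      rw [mul_sub, h5, mul_one, sub_self]
    have heq₁ : S.θ e * q₁ = 1 := by
      by_contra hne
      have h1 : (S.θ e * q₁) - 1 ≠ 0 := sub_ne_zero_of_ne hne
      have h2 : S.θ e * q₁ ≠ 0 := S.domain hene hq₁ne
      exact S.domain h2 h1 hidem
    obtain ⟨q₂, hq₂⟩ := S.theta_surj hσ q₁
    refine isUnit_iff_exists.mpr ⟨q₂, ?_, ?_⟩
    · apply S.theta_inj
      rw [S.theta_mul, S.theta_one, hq₂, heq₁]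
    · apply S.theta_inj
      rw [S.theta_mul, S.theta_one, hq₂, hq₁e]

/-- cancellation of one `t` on the right of a divisibility -/
theorem cancel_t {F V W : R} (hF : S.c0 F ≠ 0) (h : V * S.t = W * F) :
    ∃ W₁ : R, V = W₁ * S.θ F := by
  have hcW : S.c0 W = 0 := by
    have := congrArg S.c0 h
    rw [S.c0_mul_t, S.c0_mul] at this
    rcases mul_eq_zero.mp this.symm with h' | h'
    · exact h'
    · exact absurd h' hF
  obtain ⟨W₁, hW₁⟩ := (S.rdvd_t_iff W).mpr hcW
  refine ⟨W₁, S.t_cancel ?_⟩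
  rw [h, hW₁, mul_assoc, S.t_mul_eq F, ← mul_assoc]

theorem cancel_tpow (k : ℕ) : ∀ (F V : R), S.c0 F ≠ 0 → (∃ p : R, V * S.t ^ k = p * F) →
    ∃ W : R, V = W * S.θ^[k] F := by
  induction k with
  | zero =>
    rintro F V hF ⟨p, hp⟩
    rw [pow_zero, mul_one] at hp
    exact ⟨p, hp⟩
  | succ k ih =>
    rintro F V hF ⟨p, hp⟩
    rw [pow_succ, ← mul_assoc] at hp
    obtain ⟨W₁, hW₁⟩ := S.cancel_t hF hp
    have hθF : S.c0 (S.θ F) ≠ 0 := by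
      rw [S.c0_theta]
      exact fun hh => hF (σ.injective (by rw [hh, map_zero]))
    obtain ⟨W, hW⟩ := ih (S.θ F) V hθF ⟨W₁, hW₁⟩
    exact ⟨W, by rw [hW, Function.iterate_succ_apply]⟩

theorem rdvd_of_theta_mul_tpow (hσ : Function.Bijective ⇑σ) {F V : R} (hF : S.c0 F ≠ 0)
    (k : ℕ) (h : ∃ p : R, (S.θ^[k] V) * S.t ^ k = p * F) : RDvd F V := by
  obtain ⟨W, hW⟩ := S.cancel_tpow k F (S.θ^[k] V) hF h
  obtain ⟨W', hW'⟩ := S.theta_iter_surj hσ k W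
  refine ⟨W', S.theta_iter_inj k ?_⟩
  rw [S.theta_iter_mul, hW']
  exact hW


theorem c0_def (x : R) : S.c0 x = S.coeff x 0 := rfl

/-- `c0` as a ring homomorphism. -/
noncomputable def c0R : R →+* D where
  toFun := S.c0
  map_one' := S.c0_one
  map_mul' := S.c0_mul
  map_zero' := S.c0_zero
  map_add' := S.c0_add

theorem c0R_apply (x : R) : S.c0R x = S.c0 x := rfl

theorem iota_central {c : D} (hc1 : ∀ b : D, c * b = b * c) (hc2 : σ c = c) (r : R) :
    S.ι c * r = r * S.ι c := by
  conv_lhs => rw [← S.sum_coeff r]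
  conv_rhs => rw [← S.sum_coeff r]
  rw [Finsupp.mul_sum, Finsupp.sum_mul]
  apply Finsupp.sum_congr
  intro i _
  have hct : Commute (S.ι c) S.t := by
    show S.ι c * S.t = S.t * S.ι c
    rw [S.tmul, hc2]
  have hpow : S.ι c * S.t ^ i = S.t ^ i * S.ι c := (hct.pow_right i)
  rw [← mul_assoc, ← map_mul, hc1, map_mul, mul_assoc, hpow, ← mul_assoc]

end SkewPolyData

theorem mem_fixC {D : Type} [DivisionRing D] {σ : D →+* D} {x : D} (hx : x ∈ fixC σ) :
    x ∈ Set.center D ∧ σ x = x := by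
  have h2 : x ∈ ({a : D | a ∈ Set.center D ∧ σ a = a ∧ (0:D) = 0} : Set D) := hx
  exact ⟨h2.1, h2.2.1⟩

end SkewAux

theorem statement_1 (D R : Type) [DivisionRing D] [Ring R]
    (σ : D →+* D) (hσ : Function.Bijective ⇑σ)
    (S : SkewPolyData D σ (fun _ => 0) R)
    (u : D) (hu : u ≠ 0) (n : ℕ) (hn : 0 < n)
    (hinn : ∀ a : D, (⇑σ)^[n] a = u * a * u⁻¹)
    (hout : ∀ i : ℕ, 0 < i → i < n →
      ¬∃ v : D, v ≠ 0 ∧ ∀ a : D, (⇑σ)^[i] a = v * a * v⁻¹)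
    (d : ℕ) (hd : 0 < d) (hdim : RelDimD (Set.center D) Set.univ (d * d))
    (x₀ : R) (hx₀ : x₀ = S.ι u⁻¹ * S.t ^ n)
    (m : ℕ) (hm : 0 < m) (a : ℕ → D) (f : R)
    (hf : f = S.t ^ m - ∑ i ∈ Finset.range m, S.ι (a i) * S.t ^ i)
    (hmonic : S.MonicDeg f m)
    (h : R) (P : Polynomial ↥(fixC σ)) (hmclm : S.IsMclm (fixC σ) x₀ f h P) :
    ((a 0 ≠ 0 ↔ RightCoprimeWith f S.t) ∧
      (a 0 ≠ 0 ↔ P.coeff 0 ≠ 0) ∧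
      (a 0 ≠ 0 ↔ RightCoprimeWith h S.t)) ∧
    (a 0 ≠ 0 → f ≠ S.t ∧ P ≠ Polynomial.X) := by
  classical
  obtain ⟨hPmon, hheq, hfh, hmin⟩ := hmclm
  have hc0monom : ∀ (b : D) (i : ℕ), S.c0 (S.ι b * S.t ^ i) = if i = 0 then b else 0 := by
    intro b i
    rw [S.c0_def, S.coeff_monom, Finsupp.single_apply]
  have hc0tn : S.c0 (S.t ^ n) = 0 := by
    have := hc0monom 1 n
    simpa [hn.ne'] using this
  -- constant coefficient of f
  have hc0f : S.c0 f = -(a 0) := by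
    have e : S.c0R f = -(a 0) := by
      rw [hf, map_sub, map_sum, map_pow]
      rw [show S.c0R S.t = 0 from S.c0_t, zero_pow hm.ne']
      have e2 : ∀ i ∈ Finset.range m, S.c0R (S.ι (a i) * S.t ^ i)
          = if i = 0 then a i else 0 := fun i _ => hc0monom (a i) i
      rw [Finset.sum_congr rfl e2, Finset.sum_ite_eq' (Finset.range m) 0 a,
        if_pos (Finset.mem_range.mpr hm), zero_sub]
    exact e
  have hkey1 : a 0 ≠ 0 ↔ S.c0 f ≠ 0 := by rw [hc0f, neg_ne_zero]
  -- constant coefficient of h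
  have hc0x0 : S.c0 x₀ = 0 := by
    rw [hx₀, S.c0_iota_mul, hc0tn, mul_zero]
  have hc0h : S.c0 h = ((P.coeff 0 : ↥(fixC σ)) : D) := by
    have e1 : S.c0R h = S.c0R (Polynomial.eval₂ (S.ι.comp (fixC σ).subtype) x₀ P) := by
      rw [hheq]; rfl
    rw [Polynomial.hom_eval₂, show S.c0R x₀ = 0 from hc0x0, Polynomial.eval₂_at_zero] at e1
    rw [show S.c0 h = S.c0R h from rfl, e1]
    show S.c0 (S.ι ((P.coeff 0 : ↥(fixC σ)) : D)) = _
    exact S.c0_iota _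
  have hcoe : ((P.coeff 0 : ↥(fixC σ)) : D) ≠ 0 ↔ P.coeff 0 ≠ 0 := by
    constructor
    · intro h1 h2; rw [h2] at h1; simpa using h1
    · intro h1 h2
      exact h1 (Subtype.coe_injective (by simpa using h2))
  -- (c) → (a)
  have hcta : P.coeff 0 ≠ 0 → a 0 ≠ 0 := by
    intro hP0
    rw [hkey1]
    obtain ⟨p, hp⟩ := hfh
    intro hcf0
    have hz : S.c0 h = 0 := by rw [hp, S.c0_mul, hcf0, mul_zero]
    rw [hc0h] at hz
    exact (hcoe.mpr hP0) hz
  -- (a) → (c)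
  have hatc : a 0 ≠ 0 → P.coeff 0 ≠ 0 := by
    intro ha0 hP0
    have hcf : S.c0 f ≠ 0 := hkey1.mp ha0
    obtain ⟨Q, hPQ⟩ := Polynomial.X_dvd_iff.mpr hP0
    have hQmon : Q.Monic := Polynomial.monic_X.of_mul_monic_left (hPQ ▸ hPmon)
    have hQne : Q ≠ 0 := hQmon.ne_zero
    have hdeg : Q.degree < P.degree := by
      rw [hPQ, Polynomial.X_mul]
      exact Polynomial.degree_lt_degree_mul_X hQne
    have hcomm : ∀ k : ℕ, Commute ((S.ι.comp (fixC σ).subtype) (Q.coeff k)) x₀ := by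
      intro k
      obtain ⟨hc1, hc2⟩ := mem_fixC (Q.coeff k).2
      exact S.iota_central (fun b => (Set.mem_center_iff.mp hc1).comm b) hc2 x₀
    set G : R := Polynomial.eval₂ (S.ι.comp (fixC σ).subtype) x₀ Q with hG
    have hhG : h = x₀ * G := by
      rw [hheq]
      show Polynomial.eval₂ (S.ι.comp (fixC σ).subtype) x₀ P = x₀ * G
      rw [hPQ, Polynomial.eval₂_mul_noncomm _ _ hcomm, Polynomial.eval₂_X]
    obtain ⟨p, hp⟩ := hfh
    have key : (S.θ^[n] G) * S.t ^ n = (S.ι u * p) * f := by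
      have e1 : S.ι u * h = (S.θ^[n] G) * S.t ^ n := by
        rw [hhG, hx₀, mul_assoc (S.ι u⁻¹) (S.t ^ n) G, ← mul_assoc (S.ι u), ← map_mul,
          mul_inv_cancel₀ hu, map_one, one_mul, S.tpow_mul_eq]
      rw [← e1, hp, ← mul_assoc]
    have hdvd : RDvd f G := S.rdvd_of_theta_mul_tpow hσ hcf n ⟨S.ι u * p, key⟩
    have hle := hmin Q hQmon hdvd
    exact absurd hle (not_le.mpr hdeg)
  have hac : a 0 ≠ 0 ↔ P.coeff 0 ≠ 0 := ⟨hatc, hcta⟩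
  refine ⟨⟨?_, hac, ?_⟩, ?_⟩
  · exact hkey1.trans (S.coprime_with_t_iff hσ f).symm
  · rw [hac, ← hcoe, ← hc0h]
    exact (S.coprime_with_t_iff hσ h).symm
  · intro ha0
    constructor
    · intro hft
      have := hkey1.mp ha0
      rw [hft, S.c0_t] at this
      exact this rfl
    · intro hPX
      have := hac.mp ha0
      rw [hPX, Polynomial.coeff_X_zero] at this
      exact this rfl
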